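/- Let X_1,...,X_n, X_{n+1} be exchangeable real-valued random variables (the non-conformity scores), and let q̂ be the ⌈(n+1)(1−δ)⌉-th smallest value among X_1,...,X_n, where δ ∈ (0,1) and ⌈(n+1)(1−δ)⌉ ≤ n. Then P(X_{n+1} ≤ q̂) ≥ 1 − δ. -/

import Mathlib

open MeasureTheory
open scoped ENNReal
theorem countP_ofFn (n : ℕ) (f : Fin n → ℝ) (p : ℝ → Bool) :
    (List.ofFn f).countP p = (Finset.univ.filter (fun i => p (f i))).card := by
  rw [List.ofFn_eq_map, List.countP_map, List.countP_eq_length_filter, Fin.univ_def]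
  simp only [Finset.filter, Finset.card, Multiset.filter_coe, Multiset.coe_card]
  congr 1
  apply List.filter_congr
  intro a _
  simp [Function.comp]
theorem le_getD_of_countP (L : List ℝ) (hL : L.Pairwise (· ≤ ·)) (k : ℕ) (hk1 : 1 ≤ k)
    (hkL : k ≤ L.length) (t : ℝ)
    (hc : L.countP (fun a => decide (a < t)) ≤ k - 1) :
    t ≤ L.getD (k-1) 0 := by
  by_contra h
  push_neg at h
  have hlen : k - 1 < L.length := by omega
  rw [List.getD_eq_getElem L 0 hlen] at h
  have hall : ∀ a ∈ L.take k, (fun a => decide (a < t)) a = true := by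
    intro a ha
    rw [List.mem_take_iff_getElem] at ha
    obtain ⟨i, hi, rfl⟩ := ha
    have hik : i ≤ k - 1 := by omega
    have hiL : i < L.length := by omega
    have : L[i] ≤ L[k-1] := by
      rcases lt_or_eq_of_le hik with h' | h'
      · exact (List.pairwise_iff_getElem.mp hL) i (k-1) hiL hlen h'
      · subst h'; rfl
    simp only [decide_eq_true_eq]
    exact lt_of_le_of_lt this h
  have htake : (L.take k).countP (fun a => decide (a < t)) = k := by
    rw [List.countP_eq_length.mpr hall, List.length_take]
    omega
  have : k ≤ L.countP (fun a => decide (a < t)) := by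
    conv_rhs => rw [← List.take_append_drop k L]
    rw [List.countP_append, htake]
    omega
  omega
theorem count_rank_le (m : ℕ) (x : Fin m → ℝ) (k : ℕ) (hk : k ≤ m) :
    k ≤ (Finset.univ.filter (fun j : Fin m =>
      (Finset.univ.filter (fun i => x i < x j)).card ≤ k - 1)).card := by
  rcases Nat.eq_zero_or_pos k with rfl | hk1
  · simp
  have hm : 0 < m := lt_of_lt_of_le hk1 hk
  haveI : NeZero m := ⟨hm.ne'⟩
  set σ := Tuple.sort x with hσ
  have hmono : Monotone (x ∘ σ) := Tuple.monotone_sort x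
  have hsub : ∀ i : Fin m, (i : ℕ) < k →
      (Finset.univ.filter (fun l => x l < x (σ i))).card ≤ k - 1 := by
    intro i hi
    have hcard : (Finset.univ.filter (fun l => x l < x (σ i))).card
        = (Finset.univ.filter (fun l => x (σ l) < x (σ i))).card := by
      apply Finset.card_bij' (fun l _ => σ⁻¹ l) (fun l _ => σ l)
      · intro a ha; simp only [Finset.mem_filter, Finset.mem_univ, true_and] at *
        simpa using ha
      · intro a ha; simp only [Finset.mem_filter, Finset.mem_univ, true_and] at *
        exact ha
      · intro a _; simp
      · intro a _; simp
    rw [hcard]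
    have hsub2 : (Finset.univ.filter (fun l => x (σ l) < x (σ i)))
        ⊆ Finset.Iio i := by
      intro l hl
      simp only [Finset.mem_filter, Finset.mem_univ, true_and] at hl
      rw [Finset.mem_Iio]
      by_contra hli
      push_neg at hli
      exact absurd (hmono hli) (not_le.mpr hl)
    calc (Finset.univ.filter (fun l => x (σ l) < x (σ i))).card
        ≤ (Finset.Iio i).card := Finset.card_le_card hsub2
      _ = (i : ℕ) := Fin.card_Iio i
      _ ≤ k - 1 := by omega
  have hkm : k - 1 < m := by omega
  have hcards : (Finset.univ.filter (fun i : Fin m => (i : ℕ) < k)).card = k := by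
    have heq : (Finset.univ.filter (fun i : Fin m => (i : ℕ) < k))
        = Finset.Iic (⟨k - 1, hkm⟩ : Fin m) := by
      ext i
      simp only [Finset.mem_filter, Finset.mem_univ, true_and, Finset.mem_Iic, Fin.le_def, Fin.val_mk]
      omega
    rw [heq, Fin.card_Iic]
    simp only [Fin.val_mk]
    omega
  apply le_trans (le_of_eq hcards.symm)
  apply Finset.card_le_card_of_injOn (fun i => σ i)
  · intro i hi
    simp only [Finset.mem_coe, Finset.mem_filter, Finset.mem_univ, true_and] at *
    exact hsub i hi
  · exact fun a _ b _ hab => σ.injective hab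

theorem filter_card_perm (m : ℕ) (σ : Equiv.Perm (Fin m)) (P : Fin m → Prop) [DecidablePred P] :
    (Finset.univ.filter (fun i => P (σ i))).card = (Finset.univ.filter P).card := by
  apply Finset.card_bij' (fun l _ => σ l) (fun l _ => σ⁻¹ l)
  · intro a ha; simp only [Finset.mem_filter, Finset.mem_univ, true_and] at *; exact ha
  · intro a ha; simp only [Finset.mem_filter, Finset.mem_univ, true_and] at *; simpa using ha
  · intro a _; simp
  · intro a _; simp

theorem conformal_coverage_guarantee
    {Ω : Type*} [MeasurableSpace Ω] (μ : Measure Ω) [IsProbabilityMeasure μ]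
    (n : ℕ) (hn : 1 ≤ n) (δ : ℝ) (hδ : 0 < δ ∧ δ < 1)
    (X : Fin (n + 1) → Ω → ℝ) (hX : ∀ i, Measurable (X i))
    (hexch : ∀ σ : Equiv.Perm (Fin (n + 1)),
      Measure.map (fun ω => fun i => X (σ i) ω) μ
        = Measure.map (fun ω => fun i => X i ω) μ)
    (k : ℕ) (hk : k = ⌈((n : ℝ) + 1) * (1 - δ)⌉₊) (hkn : k ≤ n)
    (qhat : Ω → ℝ)
    (hq : ∀ ω, qhat ω =
      (List.insertionSort (· ≤ ·) (List.ofFn fun i : Fin n => X i.castSucc ω)).getD (k - 1) 0) :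
    1 - δ ≤ (μ {ω | X (Fin.last n) ω ≤ qhat ω}).toReal := by
  obtain ⟨hδ0, hδ1⟩ := hδ
  have hk1 : 1 ≤ k := by
    rw [hk]
    have hd : (0 : ℝ) < 1 - δ := by linarith
    have : (0 : ℝ) < ((n : ℝ) + 1) * (1 - δ) := by positivity
    exact Nat.one_le_iff_ne_zero.mpr (by
      intro h0
      have := (Nat.ceil_eq_zero.mp h0)
      linarith)
  classical
  set V : Ω → (Fin (n + 1) → ℝ) := fun ω i => X i ω with hV
  have hVmeas : Measurable V := measurable_pi_lambda _ (fun i => hX i)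
  set g : Fin (n + 1) → (Fin (n + 1) → ℝ) → ℕ :=
    fun j x => (Finset.univ.filter (fun i => x i < x j)).card with hg
  have hgmeas : ∀ j, Measurable (g j) := by
    intro j
    have hgx : g j = fun x => ∑ i : Fin (n + 1), if x i < x j then 1 else 0 := by
      funext x
      rw [hg]
      beta_reduce
      rw [Finset.card_filter]
    rw [hgx]
    exact Finset.measurable_sum _ (fun i _ => Measurable.ite
      (measurableSet_lt (measurable_pi_apply i) (measurable_pi_apply j))
      measurable_const measurable_const)
  set S : Set (Fin (n + 1) → ℝ) := {x | g (Fin.last n) x ≤ k - 1} with hS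
  have hSmeas : MeasurableSet S := (hgmeas (Fin.last n)) measurableSet_Iic
  set A : Fin (n + 1) → Set Ω := fun j => {ω | g j (V ω) ≤ k - 1} with hA
  have hAmeas : ∀ j, MeasurableSet (A j) := fun j => hVmeas ((hgmeas j) measurableSet_Iic)
  -- each A j has the same measure as A (Fin.last n)
  have hAeq : ∀ j, μ (A j) = μ (A (Fin.last n)) := by
    intro j
    set σ := Equiv.swap j (Fin.last n) with hσ
    have hWmeas : Measurable (fun ω => fun i => X (σ i) ω) :=
      measurable_pi_lambda _ (fun i => hX (σ i))
    have hAj : A j = (fun ω => fun i => X (σ i) ω) ⁻¹' S := by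
      ext ω
      simp only [hA, hS, Set.mem_setOf_eq, Set.mem_preimage]
      have : g (Fin.last n) (fun i => X (σ i) ω) = g j (V ω) := by
        simp only [hg, hV]
        have hσlast : σ (Fin.last n) = j := Equiv.swap_apply_right j (Fin.last n)
        simp only [hσlast]
        exact filter_card_perm (n + 1) σ (fun i => X i ω < X j ω)
      rw [this]
    rw [hAj]
    have h1 : μ ((fun ω => fun i => X (σ i) ω) ⁻¹' S)
        = (Measure.map (fun ω => fun i => X (σ i) ω) μ) S := by
      rw [Measure.map_apply hWmeas hSmeas]
    have h2 : (Measure.map V μ) S = μ (V ⁻¹' S) := Measure.map_apply hVmeas hSmeas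
    rw [h1, hexch σ, h2]
    rfl
  -- sum of measures is at least k
  have hsum : (k : ℝ≥0∞) ≤ ∑ j : Fin (n + 1), μ (A j) := by
    have h1 : ∑ j : Fin (n + 1), μ (A j)
        = ∫⁻ ω, ∑ j : Fin (n + 1), (A j).indicator (1 : Ω → ℝ≥0∞) ω ∂μ := by
      rw [lintegral_finset_sum _ (fun j _ => (measurable_one.indicator (hAmeas j)))]
      congr 1
      ext j
      rw [lintegral_indicator_one (hAmeas j)]
    have h2 : ∀ ω, (k : ℝ≥0∞) ≤ ∑ j : Fin (n + 1), (A j).indicator (1 : Ω → ℝ≥0∞) ω := by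
      intro ω
      have hcount := count_rank_le (n + 1) (V ω) k (by omega)
      have heq : ∑ j : Fin (n + 1), (A j).indicator (1 : Ω → ℝ≥0∞) ω
          = ((Finset.univ.filter (fun j : Fin (n + 1) =>
              (Finset.univ.filter (fun i => V ω i < V ω j)).card ≤ k - 1)).card : ℝ≥0∞) := by
        rw [Finset.card_filter]
        push_cast
        have hmem : ∀ j, (ω ∈ A j) ↔
            ((Finset.univ.filter (fun i => V ω i < V ω j)).card ≤ k - 1) := fun j => Iff.rfl
        apply Finset.sum_congr rfl
        intro j _
        by_cases hj : ω ∈ A j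
        · rw [Set.indicator_apply, if_pos hj, if_pos ((hmem j).mp hj)]
          rfl
        · rw [Set.indicator_apply, if_neg hj, if_neg (fun hc => hj ((hmem j).mpr hc))]
      rw [heq]
      exact_mod_cast Nat.cast_le.mpr hcount
    calc (k : ℝ≥0∞) = ∫⁻ _, (k : ℝ≥0∞) ∂μ := by
          rw [lintegral_const, measure_univ, mul_one]
      _ ≤ ∫⁻ ω, ∑ j : Fin (n + 1), (A j).indicator (1 : Ω → ℝ≥0∞) ω ∂μ :=
          lintegral_mono h2
      _ = ∑ j : Fin (n + 1), μ (A j) := h1.symm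
  -- hence μ (A last) ≥ k / (n+1)
  have hsum2 : (k : ℝ≥0∞) ≤ (n + 1 : ℕ) * μ (A (Fin.last n)) := by
    calc (k : ℝ≥0∞) ≤ ∑ j : Fin (n + 1), μ (A j) := hsum
      _ = ∑ _j : Fin (n + 1), μ (A (Fin.last n)) := by
          exact Finset.sum_congr rfl (fun j _ => hAeq j)
      _ = (n + 1 : ℕ) * μ (A (Fin.last n)) := by
          rw [Finset.sum_const, Finset.card_univ, Fintype.card_fin, nsmul_eq_mul]
  have hfin : μ (A (Fin.last n)) ≠ ⊤ := measure_ne_top μ _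
  have hreal : (k : ℝ) ≤ ((n : ℝ) + 1) * (μ (A (Fin.last n))).toReal := by
    have := ENNReal.toReal_mono (by
      exact ENNReal.mul_ne_top (by simp) hfin) hsum2
    rw [ENNReal.toReal_natCast, ENNReal.toReal_mul, ENNReal.toReal_natCast] at this
    push_cast at this
    linarith
  have hcoverage : 1 - δ ≤ (μ (A (Fin.last n))).toReal := by
    have hle : ((n : ℝ) + 1) * (1 - δ) ≤ (k : ℝ) := by
      rw [hk]
      exact Nat.le_ceil _
    have hn1 : (0 : ℝ) < (n : ℝ) + 1 := by positivity
    nlinarith [hreal, hle]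
  -- A last is contained in the coverage event
  have hsubset : A (Fin.last n) ⊆ {ω | X (Fin.last n) ω ≤ qhat ω} := by
    intro ω hω
    simp only [hA, Set.mem_setOf_eq] at hω
    set t := X (Fin.last n) ω with ht
    set l := List.ofFn (fun i : Fin n => X i.castSucc ω) with hl
    set L := List.insertionSort (· ≤ ·) l with hL
    have hperm : L.Perm l := List.perm_insertionSort (· ≤ ·) l
    have hsorted : L.Pairwise (· ≤ ·) := List.pairwise_insertionSort (· ≤ ·) l
    have hlenL : L.length = n := by
      rw [hperm.length_eq, hl, List.length_ofFn]
    have hcount1 : (Finset.univ.filter (fun i : Fin n => X i.castSucc ω < t)).card ≤ k - 1 := by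
      refine le_trans ?_ hω
      apply Finset.card_le_card_of_injOn (fun i => i.castSucc)
      · intro i hi
        simp only [Finset.mem_coe, Finset.mem_filter, Finset.mem_univ, true_and] at *
        exact hi
      · exact fun a _ b _ hab => Fin.castSucc_injective n hab
    have hcount2 : L.countP (fun a => decide (a < t)) ≤ k - 1 := by
      rw [hperm.countP_eq]
      rw [hl, countP_ofFn]
      convert hcount1 using 3
      simp
    have := le_getD_of_countP L hsorted k hk1 (by omega) t hcount2
    simp only [Set.mem_setOf_eq]
    rw [hq ω]
    exact this
  calc 1 - δ ≤ (μ (A (Fin.last n))).toReal := hcoverage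
    _ ≤ (μ {ω | X (Fin.last n) ω ≤ qhat ω}).toReal :=
        ENNReal.toReal_mono (measure_ne_top μ _) (measure_mono hsubset)
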